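/- For every natural number n ≥ 1, the generalized quaternion algebra H_ℚ(−1, a_{2n+1}) splits, i.e. it is isomorphic as a ℚ-algebra to the algebra of 2×2 matrices over ℚ. -/

import Mathlib

/-- The sequence `a` defined by `a 0 = 0`, `a 1 = 1`, `a (n+2) = l * a (n+1) + a n`. -/
def a (l : ℕ) : ℕ → ℤ
  | 0 => 0
  | 1 => 1
  | n + 2 => l * a l (n + 1) + a l n

/-- The sequence `b` defined by `b 0 = 2`, `b 1 = l`, `b (n+2) = l * b (n+1) + b n`. -/
def b (l : ℕ) : ℕ → ℤ
  | 0 => 2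
  | 1 => (l : ℤ)
  | n + 2 => l * b l (n + 1) + b l n

open Quaternion Matrix in
lemma splits_of_sq_add_sq (p q : ℚ) (hs : p^2 + q^2 ≠ 0) (β : ℚ) (hβ : β = p^2 + q^2) :
    Nonempty (ℍ[ℚ, -1, β] ≃ₐ[ℚ] Matrix (Fin 2) (Fin 2) ℚ) := by
  subst hβ
  set s : ℚ := p^2 + q^2 with hs'
  let Q : QuaternionAlgebra.Basis (Matrix (Fin 2) (Fin 2) ℚ) (-1) 0 s :=
  { i := !![0, 1; -1, 0]
    j := !![p, q; q, -p]
    k := !![q, -p; -p, -q]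
    i_mul_i := by ext i j; fin_cases i <;> fin_cases j <;>
      simp [Matrix.mul_apply, Fin.sum_univ_two]
    j_mul_j := by ext i j; fin_cases i <;> fin_cases j <;>
      simp [Matrix.mul_apply, Fin.sum_univ_two, hs'] <;> ring
    i_mul_j := by ext i j; fin_cases i <;> fin_cases j <;>
      simp [Matrix.mul_apply, Fin.sum_univ_two]
    j_mul_i := by ext i j; fin_cases i <;> fin_cases j <;>
      simp [Matrix.mul_apply, Fin.sum_univ_two] }
  let φ := Q.liftHom
  have hsurj : Function.Surjective φ := by
    intro m
    refine ⟨⟨(m 0 0 + m 1 1)/2, (m 0 1 - m 1 0)/2,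
      (p*(m 0 0 - m 1 1) + q*(m 0 1 + m 1 0))/(2*s),
      (q*(m 0 0 - m 1 1) - p*(m 0 1 + m 1 0))/(2*s)⟩, ?_⟩
    show Q.lift _ = m
    unfold QuaternionAlgebra.Basis.lift
    ext i j
    fin_cases i <;> fin_cases j <;>
      simp [Q, Matrix.smul_apply, Matrix.one_apply, Algebra.algebraMap_eq_smul_one] <;>
      field_simp <;> ring
  have hinj : Function.Injective φ := by
    have h4 : Module.finrank ℚ ℍ[ℚ,-1,s] = Module.finrank ℚ (Matrix (Fin 2) (Fin 2) ℚ) := by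
      rw [QuaternionAlgebra.finrank_eq_four, Module.finrank_matrix]
      simp
    exact (LinearMap.injective_iff_surjective_of_finrank_eq_finrank
      (f := φ.toLinearMap) h4).mpr hsurj
  exact ⟨AlgEquiv.ofBijective φ ⟨hinj, hsurj⟩⟩

lemma a_add (l m n : ℕ) : a l (m + n + 1) = a l (m+1) * a l (n+1) + a l m * a l n := by
  induction m using Nat.twoStepInduction generalizing n with
  | zero => simp [a]
  | one =>
      rw [show 1 + n + 1 = n + 2 from by ring, a]
      simp [a]
  | more m ih ih1 =>
      have h2 : a l (m+2) = l * a l (m+1) + a l m := by rw [a]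
      have h3 : a l (m+2+1) = l * a l (m+2) + a l (m+1) := by
        rw [show m+2+1 = (m+1)+2 from rfl, a, show m+1+1 = m+2 from rfl]
      rw [show m + 2 + n + 1 = (m + n + 1) + 2 from by ring, a, h3, h2,
          show m+n+1+1 = m+1+n+1 from by ring, ih1 n, show m+1+1 = m+2 from rfl, h2, ih n]
      ring

lemma a_pos (l : ℕ) (hl : 0 < l) : ∀ n, 0 ≤ a l n ∧ 1 ≤ a l (n+1) := by
  intro n
  induction n with
  | zero => exact ⟨le_refl 0, le_refl 1⟩
  | succ n ih =>
      refine ⟨le_trans zero_le_one ih.2, ?_⟩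
      rw [a]
      have hl' : (1:ℤ) ≤ l := by exact_mod_cast hl
      nlinarith [ih.1, ih.2]

open Quaternion in
/-- The quaternion algebra `H_ℚ(-1, a_{2n+1})` splits. -/
theorem quat_alg_splits_a (l : ℕ) (hl : 0 < l) (n : ℕ) (hn : 1 ≤ n) :
    Nonempty (ℍ[ℚ, -1, ((a l (2 * n + 1) : ℤ) : ℚ)] ≃ₐ[ℚ] Matrix (Fin 2) (Fin 2) ℚ) := by
  have key : a l (2 * n + 1) = a l (n+1) * a l (n+1) + a l n * a l n := by
    rw [show 2 * n + 1 = n + n + 1 from by ring, a_add]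
  have hq : (1:ℤ) ≤ a l (n+1) := (a_pos l hl n).2
  refine splits_of_sq_add_sq ((a l (n+1) : ℤ) : ℚ) ((a l n : ℤ) : ℚ) ?_ _ ?_
  · have : (1:ℚ) ≤ ((a l (n+1) : ℤ) : ℚ) := by exact_mod_cast hq
    nlinarith [sq_nonneg ((a l n : ℤ) : ℚ)]
  · rw [key]; push_cast; ring
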